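/- The 3-VFCA rule f(x,y,z) = (x₁y₂ + x₁y₃ + y₁z₁, x₂y₂ + x₃y₂ + y₁z₂, x₂y₃ + x₃y₃ + y₁z₃) is complete number-conserving on periodic configurations in the simplex Δ of any period L. -/

import Mathlib

theorem stmt_13 (L : ℕ) (hL : 0 < L)
    (f : (Fin 3 → ℝ) → (Fin 3 → ℝ) → (Fin 3 → ℝ) → (Fin 3 → ℝ))
    (hf : ∀ x y z, f x y z =
      ![x 0 * y 1 + x 0 * y 2 + y 0 * z 0,
        x 1 * y 1 + x 2 * y 1 + y 0 * z 1,
        x 1 * y 2 + x 2 * y 2 + y 0 * z 2])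
    (x : ℤ → Fin 3 → ℝ) (hper : ∀ i, x (i + L) = x i)
    (hΔ : ∀ i, (∑ m, x i m) = 1 ∧ ∀ m, 0 ≤ x i m) :
    ∀ k, ∑ i ∈ Finset.range L, f (x ((i : ℤ) - 1)) (x (i : ℤ)) (x ((i : ℤ) + 1)) k
      = ∑ i ∈ Finset.range L, x (i : ℤ) k := by
  have key : ∀ (g : ℤ → ℝ), (∀ i, g (i + L) = g i) →
      ∑ i ∈ Finset.range L, g ((i : ℤ) + 1) = ∑ i ∈ Finset.range L, g (i : ℤ) := by
    intro g hg
    obtain ⟨n, rfl⟩ := Nat.exists_eq_succ_of_ne_zero hL.ne'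
    rw [Finset.sum_range_succ, Finset.sum_range_succ']
    have h0 : g ((n : ℤ) + 1) = g 0 := by
      have := hg 0
      push_cast at this
      rw [zero_add] at this
      exact this
    rw [h0]
    push_cast
    ring
  have hx : ∀ i : ℤ, x i 0 + x i 1 + x i 2 = 1 := fun i => by
    have := (hΔ i).1; rwa [Fin.sum_univ_three] at this
  have hperm : ∀ (m : Fin 3) (i : ℤ), x (i - 1 + L) m = x (i - 1) m := by
    intro m i; rw [hper]
  intro k
  simp only [hf]
  fin_cases k
  · -- k = 0
    have h1 := key (fun j => x (j - 1) 0 * x j 0) (by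
      intro i
      have e : i + (L : ℤ) - 1 = i - 1 + L := by ring
      simp only [e, hper])
    simp only [add_sub_cancel_right] at h1
    have h2 := key (fun j => x (j - 1) 0) (by
      intro i
      have e : i + (L : ℤ) - 1 = i - 1 + L := by ring
      simp only [e, hper])
    simp only [add_sub_cancel_right] at h2
    have h3 : ∑ i ∈ Finset.range L,
        (x ((i : ℤ) - 1) 0 * x (i : ℤ) 1 + x ((i : ℤ) - 1) 0 * x (i : ℤ) 2
          + x ((i : ℤ) - 1) 0 * x (i : ℤ) 0) = ∑ i ∈ Finset.range L, x ((i : ℤ) - 1) 0 :=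
      Finset.sum_congr rfl (fun i _ => by
        have := hx (i : ℤ); linear_combination x ((i : ℤ) - 1) 0 * this)
    norm_num
    rw [Finset.sum_add_distrib, h1, ← Finset.sum_add_distrib, h3, ← h2]
  · -- k = 1
    have h1 := key (fun j => x (j - 1) 0 * x j 1) (by
      intro i
      have e : i + (L : ℤ) - 1 = i - 1 + L := by ring
      simp only [e, hper])
    simp only [add_sub_cancel_right] at h1
    have h3 : ∑ i ∈ Finset.range L,
        (x ((i : ℤ) - 1) 1 * x (i : ℤ) 1 + x ((i : ℤ) - 1) 2 * x (i : ℤ) 1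
          + x ((i : ℤ) - 1) 0 * x (i : ℤ) 1) = ∑ i ∈ Finset.range L, x (i : ℤ) 1 :=
      Finset.sum_congr rfl (fun i _ => by
        have := hx ((i : ℤ) - 1); linear_combination x (i : ℤ) 1 * this)
    norm_num
    rw [Finset.sum_add_distrib, h1, ← Finset.sum_add_distrib, h3]
  · -- k = 2
    have h1 := key (fun j => x (j - 1) 0 * x j 2) (by
      intro i
      have e : i + (L : ℤ) - 1 = i - 1 + L := by ring
      simp only [e, hper])
    simp only [add_sub_cancel_right] at h1
    have h3 : ∑ i ∈ Finset.range L,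
        (x ((i : ℤ) - 1) 1 * x (i : ℤ) 2 + x ((i : ℤ) - 1) 2 * x (i : ℤ) 2
          + x ((i : ℤ) - 1) 0 * x (i : ℤ) 2) = ∑ i ∈ Finset.range L, x (i : ℤ) 2 :=
      Finset.sum_congr rfl (fun i _ => by
        have := hx ((i : ℤ) - 1); linear_combination x (i : ℤ) 2 * this)
    norm_num
    rw [Finset.sum_add_distrib, h1, ← Finset.sum_add_distrib, h3]
    rfl
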